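/- Let S be a finite linearly ordered set and σ : S → S a bijection. With δ_I(x) defined as δ_I(x) = (−1)^{pos_{σ(I)}(σ(x)) − pos_I(x)} (positions taken within the induced orders), there exists a unique function ε from the subsets of S to {±1} such that ε(∅) = 1 and ε(I) = δ_I(x) · ε(I∖{x}) for every nonempty I ⊆ S and every x ∈ I. -/
import Mathlib


/-- The position of `x` within the subset `I`: `pos_I(x) = |{y ∈ I : y ≤ x}|`. -/
def posIn {S : Type} [LinearOrder S] (I : Finset S) (x : S) : ℕ :=
  (I.filter (fun y => y ≤ x)).card

/-- The sign `δ_I(x) = (−1)^(pos_{σ(I)}(σ(x)) − pos_I(x))`. -/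
def deltaSign {S : Type} [LinearOrder S] (σ : S ≃ S)
    (I : Finset S) (x : S) : ℤˣ :=
  (-1 : ℤˣ) ^ ((posIn (I.image σ) (σ x) : ℤ) - (posIn I x : ℤ))

namespace EpsilonAux

variable {S : Type} [LinearOrder S]

/-- inversions of `σ` on `I` with first coordinate `a`. -/
def invAt (σ : S ≃ S) (I : Finset S) (a : S) : ℕ :=
  (I.filter fun b => a < b ∧ σ b < σ a).card

/-- total inversion count of `σ` on `I`. -/
def invCount (σ : S ≃ S) (I : Finset S) : ℕ :=
  ∑ a ∈ I, invAt σ I a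

/-- The candidate sign function. -/
def eps (σ : S ≃ S) (I : Finset S) : ℤˣ :=
  (-1 : ℤˣ) ^ invCount σ I

lemma posIn_eq (σ : S ≃ S) {I : Finset S} {x : S} (hx : x ∈ I) :
    posIn I x =
      ((I.erase x).filter fun y => y < x ∧ σ y < σ x).card
      + ((I.erase x).filter fun y => y < x ∧ σ x < σ y).card + 1 := by
  have h1 : I.filter (fun y => y ≤ x)
      = insert x ((I.erase x).filter fun y => y < x) := by
    ext y
    simp only [Finset.mem_filter, Finset.mem_insert, Finset.mem_erase]
    constructor
    · rintro ⟨hy, hle⟩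
      rcases lt_or_eq_of_le hle with h | h
      · exact Or.inr ⟨⟨ne_of_lt h, hy⟩, h⟩
      · exact Or.inl h
    · rintro (rfl | ⟨⟨_, hy⟩, h⟩)
      · exact ⟨hx, le_rfl⟩
      · exact ⟨hy, le_of_lt h⟩
  have h2 : ((I.erase x).filter fun y => y < x)
      = ((I.erase x).filter fun y => y < x ∧ σ y < σ x)
        ∪ ((I.erase x).filter fun y => y < x ∧ σ x < σ y) := by
    ext y
    simp only [Finset.mem_filter, Finset.mem_union, Finset.mem_erase]
    constructor
    · rintro ⟨⟨hne, hy⟩, hlt⟩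
      have : σ y ≠ σ x := fun h => hne (σ.injective h)
      rcases lt_or_gt_of_ne this with h | h
      · exact Or.inl ⟨⟨hne, hy⟩, hlt, h⟩
      · exact Or.inr ⟨⟨hne, hy⟩, hlt, h⟩
    · rintro (⟨hy, hlt, _⟩ | ⟨hy, hlt, _⟩) <;> exact ⟨hy, hlt⟩
  have hdisj : Disjoint ((I.erase x).filter fun y => y < x ∧ σ y < σ x)
      ((I.erase x).filter fun y => y < x ∧ σ x < σ y) := by
    rw [Finset.disjoint_left]
    intro y h1' h2'
    simp only [Finset.mem_filter] at h1' h2'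
    exact absurd h2'.2.2 (not_lt_of_gt h1'.2.2)
  have hx' : x ∉ (I.erase x).filter fun y => y < x :=
    fun h => (Finset.mem_erase.mp (Finset.mem_filter.mp h).1).1 rfl
  rw [posIn, h1, Finset.card_insert_of_notMem hx', h2,
    Finset.card_union_of_disjoint hdisj]

lemma posIn_image_eq (σ : S ≃ S) {I : Finset S} {x : S} (hx : x ∈ I) :
    posIn (I.image σ) (σ x) =
      ((I.erase x).filter fun y => y < x ∧ σ y < σ x).card
      + ((I.erase x).filter fun y => x < y ∧ σ y < σ x).card + 1 := by
  have h0 : (I.image σ).filter (fun y => y ≤ σ x)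
      = (I.filter fun y => σ y ≤ σ x).image σ := by
    ext z
    simp only [Finset.mem_filter, Finset.mem_image]
    constructor
    · rintro ⟨⟨y, hy, rfl⟩, hle⟩
      exact ⟨y, ⟨hy, hle⟩, rfl⟩
    · rintro ⟨y, ⟨hy, hle⟩, rfl⟩
      exact ⟨⟨y, hy, rfl⟩, hle⟩
  have h1 : I.filter (fun y => σ y ≤ σ x)
      = insert x ((I.erase x).filter fun y => σ y < σ x) := by
    ext y
    simp only [Finset.mem_filter, Finset.mem_insert, Finset.mem_erase]
    constructor
    · rintro ⟨hy, hle⟩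
      rcases lt_or_eq_of_le hle with h | h
      · exact Or.inr ⟨⟨fun hh => absurd (congrArg σ hh) (ne_of_lt h), hy⟩, h⟩
      · exact Or.inl (σ.injective h)
    · rintro (rfl | ⟨⟨_, hy⟩, h⟩)
      · exact ⟨hx, le_rfl⟩
      · exact ⟨hy, le_of_lt h⟩
  have h2 : ((I.erase x).filter fun y => σ y < σ x)
      = ((I.erase x).filter fun y => y < x ∧ σ y < σ x)
        ∪ ((I.erase x).filter fun y => x < y ∧ σ y < σ x) := by
    ext y
    simp only [Finset.mem_filter, Finset.mem_union, Finset.mem_erase]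
    constructor
    · rintro ⟨⟨hne, hy⟩, hlt⟩
      rcases lt_or_gt_of_ne hne with h | h
      · exact Or.inl ⟨⟨hne, hy⟩, h, hlt⟩
      · exact Or.inr ⟨⟨hne, hy⟩, h, hlt⟩
    · rintro (⟨hy, _, hlt⟩ | ⟨hy, _, hlt⟩) <;> exact ⟨hy, hlt⟩
  have hdisj : Disjoint ((I.erase x).filter fun y => y < x ∧ σ y < σ x)
      ((I.erase x).filter fun y => x < y ∧ σ y < σ x) := by
    rw [Finset.disjoint_left]
    intro y h1' h2'
    simp only [Finset.mem_filter] at h1' h2'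
    exact absurd h2'.2.1 (not_lt_of_gt h1'.2.1)
  have hx' : x ∉ (I.erase x).filter fun y => σ y < σ x :=
    fun h => (Finset.mem_erase.mp (Finset.mem_filter.mp h).1).1 rfl
  rw [posIn, h0, Finset.card_image_of_injective _ σ.injective, h1,
    Finset.card_insert_of_notMem hx', h2, Finset.card_union_of_disjoint hdisj]

lemma invCount_erase (σ : S ≃ S) {I : Finset S} {x : S} (hx : x ∈ I) :
    invCount σ I = invCount σ (I.erase x)
      + ((I.erase x).filter fun y => y < x ∧ σ x < σ y).card
      + ((I.erase x).filter fun y => x < y ∧ σ y < σ x).card := by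
  set J := I.erase x with hJ
  have hxJ : x ∉ J := Finset.notMem_erase x I
  have hins : insert x J = I := Finset.insert_erase hx
  have hAtx : invAt σ I x = (J.filter fun y => x < y ∧ σ y < σ x).card := by
    unfold invAt
    congr 1
    ext y
    simp only [Finset.mem_filter, hJ, Finset.mem_erase]
    constructor
    · rintro ⟨hy, hlt, hσ⟩
      exact ⟨⟨ne_of_gt hlt, hy⟩, hlt, hσ⟩
    · rintro ⟨⟨_, hy⟩, hlt, hσ⟩
      exact ⟨hy, hlt, hσ⟩
  have hAt : ∀ a ∈ J, invAt σ I a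
      = invAt σ J a + (if a < x ∧ σ x < σ a then 1 else 0) := by
    intro a _
    unfold invAt
    rw [← hins, Finset.filter_insert]
    split_ifs with h
    · rw [Finset.card_insert_of_notMem (fun hc => hxJ (Finset.mem_filter.mp hc).1)]
    · rw [Nat.add_zero]
  have hsum : invCount σ I = invAt σ I x + ∑ a ∈ J, invAt σ I a := by
    rw [invCount, hJ, Finset.add_sum_erase _ _ hx]
  rw [hsum, hAtx, Finset.sum_congr rfl hAt, Finset.sum_add_distrib]
  have : (∑ a ∈ J, if a < x ∧ σ x < σ a then 1 else 0)
      = (J.filter fun y => y < x ∧ σ x < σ y).card := by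
    rw [Finset.card_filter]
  rw [this, invCount]
  ring

lemma eps_rec (σ : S ≃ S) {I : Finset S} {x : S} (hx : x ∈ I) :
    eps σ I = deltaSign σ I x * eps σ (I.erase x) := by
  set J := I.erase x with hJ
  set c := (J.filter fun y => y < x ∧ σ y < σ x).card with hc
  set t1 := (J.filter fun y => y < x ∧ σ x < σ y).card with ht1
  set t2 := (J.filter fun y => x < y ∧ σ y < σ x).card with ht2
  have hA : posIn I x = c + t1 + 1 := posIn_eq σ hx
  have hB : posIn (I.image σ) (σ x) = c + t2 + 1 := posIn_image_eq σ hx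
  have hI : invCount σ I = invCount σ J + t1 + t2 := invCount_erase σ hx
  have heps : ∀ K : Finset S, eps σ K = Int.negOnePow (invCount σ K) := by
    intro K
    rw [eps, Int.negOnePow, zpow_natCast]
  have hdelta : deltaSign σ I x
      = Int.negOnePow ((posIn (I.image σ) (σ x) : ℤ) - (posIn I x : ℤ)) := rfl
  rw [heps, heps, hdelta, ← Int.negOnePow_add]
  have : (invCount σ I : ℤ) =
      ((posIn (I.image σ) (σ x) : ℤ) - (posIn I x : ℤ) + (invCount σ J : ℤ))
      + 2 * t1 := by
    rw [hI, hA, hB]; push_cast; ring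
  rw [this, Int.negOnePow_add, Int.negOnePow_two_mul, mul_one]

end EpsilonAux

/-- There exists a unique sign function `ε` on subsets of `S` with `ε(∅) = 1` and
`ε(I) = δ_I(x)·ε(I∖{x})` for every nonempty `I` and `x ∈ I`. -/
theorem exists_unique_epsilon {S : Type} [LinearOrder S] [Fintype S] (σ : S ≃ S) :
    ∃! ε : Finset S → ℤˣ, ε ∅ = 1 ∧
      ∀ (I : Finset S) (x : S), x ∈ I → ε I = deltaSign σ I x * ε (I.erase x) := by
  refine ⟨EpsilonAux.eps σ, ⟨?_, fun I x hx => EpsilonAux.eps_rec σ hx⟩, ?_⟩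
  · simp [EpsilonAux.eps, EpsilonAux.invCount]
  · rintro ε ⟨hε0, hεrec⟩
    funext I
    induction I using Finset.strongInduction with
    | _ I ih =>
      rcases I.eq_empty_or_nonempty with rfl | ⟨x, hx⟩
      · simp [hε0, EpsilonAux.eps, EpsilonAux.invCount]
      · rw [hεrec I x hx, EpsilonAux.eps_rec σ hx, ih _ (Finset.erase_ssubset hx)]
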